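/- Let F_X be an L×K fitting pattern over a field 𝔽 with minrk(F_X) = r, and suppose there exists a matrix F fitting F_X with rank(F) = r whose first r columns form an L×r matrix of rank r. Let σ be any involution of {1,…,r}. Define the L×K X-pattern B whose entry at (l, j) is 0 if j ≤ r and F_X(l, σ(j)) = 0, and X otherwise. Then minrk((F_X B; B F_X)) = r; that is, the 2-order extension with pattern (F_X B; B F_X) is a rank-invariant extension of F_X. -/

import Mathlib

open Matrix

/-- A pattern entry: `some false` = 0, `some true` = 1, `none` = X. -/
abbrev PatEntry := Option Bool

/-- A matrix `M` fits a pattern `P` if `M` is `0` at every `0`-entry of `P`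
and `1` at every `1`-entry of `P` (X-entries are unconstrained). -/
def Fits {L K 𝔽 : Type*} [Zero 𝔽] [One 𝔽]
    (P : Matrix L K PatEntry) (M : Matrix L K 𝔽) : Prop :=
  ∀ i j, (P i j = some false → M i j = 0) ∧ (P i j = some true → M i j = 1)

/-- The minrank of a pattern over the field `𝔽`. -/
noncomputable def minrk (𝔽 : Type*) [Field 𝔽] {L K : Type*} [Fintype K]
    (P : Matrix L K PatEntry) : ℕ :=
  sInf {n | ∃ M : Matrix L K 𝔽, Fits P M ∧ M.rank = n}

/-- Rank of any submatrix is at most the rank of the matrix. -/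
lemma my_rank_submatrix_le {R : Type*} [Field R] {m n l o : Type*}
    [Fintype m] [Fintype n] [Fintype o] [DecidableEq m] [DecidableEq n]
    (A : Matrix m n R) (f : l → m) (g : o → n) :
    (A.submatrix f g).rank ≤ A.rank := by
  have h1 : A.submatrix f id = (Matrix.of fun i k => if k = f i then (1:R) else 0) * A := by
    ext i j
    simp [Matrix.mul_apply, ite_mul]
  have h2 : A.submatrix f g = (A.submatrix f id) * (Matrix.of fun k j => if k = g j then (1:R) else 0) := by
    ext i j
    simp [Matrix.mul_apply, mul_ite]
  calc (A.submatrix f g).rank ≤ (A.submatrix f id).rank := by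
        rw [h2]; exact Matrix.rank_mul_le_left _ _
    _ ≤ A.rank := by rw [h1]; exact Matrix.rank_mul_le_right _ _

open Classical in
/-- Simple rank-invariant 2-order extension of any IC problem: if `FX` has
minrank `r`, witnessed by a fitting matrix `F` of rank `r` whose first `r` columns
are linearly independent, then for any involution `σ` of `{1,…,r}`, the 2-order
extension with X-pattern `B` obtained by permuting the first `r` columns of `FX`
by `σ` and X-ing everything else is rank-invariant. -/
theorem systematic_two_order_extension {L K r : ℕ} (𝔽 : Type*) [Field 𝔽] (hr : r ≤ K)
    (FX : Matrix (Fin L) (Fin K) PatEntry)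
    (hminrk : minrk 𝔽 FX = r)
    (F : Matrix (Fin L) (Fin K) 𝔽) (hF : Fits FX F) (hFrank : F.rank = r)
    (hcols : (F.submatrix id (Fin.castLE hr)).rank = r)
    (σ : Equiv.Perm (Fin r)) (hσ : ∀ i, σ (σ i) = i)
    (B : Matrix (Fin L) (Fin K) PatEntry)
    (hBdef : ∀ l j, B l j =
      if ∃ j' : Fin r, j = Fin.castLE hr j' ∧ FX l (Fin.castLE hr (σ j')) = some false
      then some false else none) :
    minrk 𝔽 (Matrix.fromBlocks FX B B FX) = r := by
  set A : Matrix (Fin L) (Fin r) 𝔽 := F.submatrix id (Fin.castLE hr) with hA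
  -- A.mulVecLin is injective
  have hinj : Function.Injective A.mulVecLin := by
    rw [← LinearMap.ker_eq_bot]
    have h := A.mulVecLin.finrank_range_add_finrank_ker
    rw [show Module.finrank 𝔽 (LinearMap.range A.mulVecLin) = r from hcols] at h
    simp only [Module.finrank_pi, Fintype.card_fin] at h
    have : Module.finrank 𝔽 (LinearMap.ker A.mulVecLin) = 0 := by omega
    exact Submodule.finrank_eq_zero.mp this
  -- range F ⊆ range A (hence equal)
  have hle : LinearMap.range A.mulVecLin ≤ LinearMap.range F.mulVecLin := by
    rintro y ⟨x, rfl⟩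
    refine ⟨fun k => if h : (k : ℕ) < r then x ⟨k, h⟩ else 0, ?_⟩
    funext l
    simp only [Matrix.mulVecLin_apply, Matrix.mulVec, _root_.dotProduct]
    calc (∑ k : Fin K, F l k * if h : (k : ℕ) < r then x ⟨k, h⟩ else 0)
        = ∑ k ∈ Finset.univ.image (Fin.castLE hr),
            F l k * if h : (k : ℕ) < r then x ⟨k, h⟩ else 0 := by
          refine (Finset.sum_subset (Finset.subset_univ _) ?_).symm
          intro k _ hk
          have : ¬ (k : ℕ) < r := fun hkr =>
            hk (Finset.mem_image.mpr ⟨⟨k, hkr⟩, Finset.mem_univ _, by simp [Fin.ext_iff]⟩)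
          simp [this]
      _ = ∑ j : Fin r, F l (Fin.castLE hr j) *
            if h : ((Fin.castLE hr j : Fin K) : ℕ) < r then x ⟨_, h⟩ else 0 :=
          Finset.sum_image (by intro a _ b _ hab; exact Fin.castLE_injective hr hab)
      _ = ∑ j : Fin r, A l j * x j := by
          refine Finset.sum_congr rfl fun j _ => ?_
          have hj : ((Fin.castLE hr j : Fin K) : ℕ) < r := j.is_lt
          rw [dif_pos hj]
          simp [hA]
  have hrange : LinearMap.range A.mulVecLin = LinearMap.range F.mulVecLin := by
    apply Submodule.eq_of_le_of_finrank_le hle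
    rw [show Module.finrank 𝔽 (LinearMap.range F.mulVecLin) = r from hFrank,
      show Module.finrank 𝔽 (LinearMap.range A.mulVecLin) = r from hcols]
  -- choose C with A * C = F
  have hcolmem : ∀ j : Fin K, ∃ c : Fin r → 𝔽, A.mulVecLin c = fun l => F l j := by
    intro j
    have : (fun l => F l j) ∈ LinearMap.range F.mulVecLin := by
      refine ⟨Pi.single j 1, ?_⟩
      funext l
      simp [Matrix.mulVecLin_apply, Matrix.mulVec_single]
    rw [← hrange] at this
    exact this
  set C : Matrix (Fin r) (Fin K) 𝔽 := Matrix.of fun i j => Classical.choose (hcolmem j) i with hC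
  have hAC : A * C = F := by
    ext l j
    have := congrFun (Classical.choose_spec (hcolmem j)) l
    simpa [Matrix.mul_apply, Matrix.mulVecLin_apply, Matrix.mulVec, _root_.dotProduct, hC] using this
  have hCid : ∀ j' : Fin r, ∀ i, C i (Fin.castLE hr j') = if i = j' then 1 else 0 := by
    intro j' i
    have h1 : A.mulVecLin (fun i => C i (Fin.castLE hr j')) = A.mulVecLin (Pi.single j' 1) := by
      have h2 := Classical.choose_spec (hcolmem (Fin.castLE hr j'))
      rw [show (fun i => C i (Fin.castLE hr j')) = Classical.choose (hcolmem (Fin.castLE hr j')) from rfl, h2]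
      funext l
      simp [Matrix.mulVecLin_apply, Matrix.mulVec_single, hA]
    have := congrFun (hinj h1) i
    simpa [Pi.single_apply] using this
  -- permutation matrix
  set P : Matrix (Fin r) (Fin r) 𝔽 := Matrix.of fun i j => if i = σ j then 1 else 0 with hP
  have hAP : ∀ l j, (A * P) l j = A l (σ j) := by
    intro l j
    simp [Matrix.mul_apply, hP, mul_ite]
  have hPP : P * P = 1 := by
    ext i j
    rw [Matrix.mul_apply, Finset.sum_eq_single (σ j)]
    · simp [hP, hσ j, Matrix.one_apply]
    · intro k _ hk
      simp [hP, hk]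
    · intro h
      exact absurd (Finset.mem_univ _) h
  set G : Matrix (Fin L) (Fin K) 𝔽 := A * P * C with hG
  set M : Matrix (Fin L ⊕ Fin L) (Fin K ⊕ Fin K) 𝔽 := Matrix.fromBlocks F G G F with hM
  have hfact : M = Matrix.fromRows A (A * P) * Matrix.fromCols C (P * C) := by
    have h3 : (A * P) * (P * C) = F := by
      rw [Matrix.mul_assoc, ← Matrix.mul_assoc P P C, hPP, Matrix.one_mul, hAC]
    rw [Matrix.fromRows_mul_fromCols, hAC, h3, hM, hG, Matrix.mul_assoc]
  have hrankM : M.rank ≤ r := by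
    rw [hfact]
    calc (Matrix.fromRows A (A * P) * Matrix.fromCols C (P * C)).rank
        ≤ (Matrix.fromCols C (P * C)).rank := Matrix.rank_mul_le_right _ _
      _ ≤ Fintype.card (Fin r) := Matrix.rank_le_card_height _
      _ = r := Fintype.card_fin r
  -- M fits the big pattern
  have hfitM : Fits (Matrix.fromBlocks FX B B FX) M := by
    have hGfit : ∀ l j, B l j = some false → G l j = 0 := by
      intro l j hB
      rw [hBdef l j] at hB
      by_cases hcond : ∃ j' : Fin r, j = Fin.castLE hr j' ∧ FX l (Fin.castLE hr (σ j')) = some false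
      · obtain ⟨j', rfl, hFX⟩ := hcond
        have : G l (Fin.castLE hr j') = (A * P) l j' := by
          simp only [hG, Matrix.mul_apply]
          rw [Finset.sum_congr rfl (fun k _ => by rw [hCid j' k])]
          simp
        rw [this, hAP]
        have := (hF l (Fin.castLE hr (σ j'))).1 hFX
        simpa [hA] using this
      · rw [if_neg hcond] at hB; exact absurd hB (by simp)
    have hBnotone : ∀ l j, B l j ≠ some true := by
      intro l j
      rw [hBdef l j]
      split <;> simp
    rintro (i | i) (j | j)
    · exact hF i j
    · exact ⟨hGfit i j, fun h => absurd h (hBnotone i j)⟩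
    · exact ⟨hGfit i j, fun h => absurd h (hBnotone i j)⟩
    · exact hF i j
  -- lower bound: any fitting matrix has rank ≥ r
  have hlow : ∀ n ∈ {n | ∃ M' : Matrix (Fin L ⊕ Fin L) (Fin K ⊕ Fin K) 𝔽,
      Fits (Matrix.fromBlocks FX B B FX) M' ∧ M'.rank = n}, r ≤ n := by
    rintro n ⟨M', hfit, rfl⟩
    have hsub : Fits FX (M'.submatrix Sum.inl Sum.inl) := by
      intro i j
      have := hfit (Sum.inl i) (Sum.inl j)
      simpa using this
    have h1 : r ≤ (M'.submatrix Sum.inl Sum.inl).rank := by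
      rw [← hminrk]
      exact Nat.sInf_le ⟨_, hsub, rfl⟩
    exact h1.trans (my_rank_submatrix_le M' Sum.inl Sum.inl)
  have hmem : r ∈ {n | ∃ M' : Matrix (Fin L ⊕ Fin L) (Fin K ⊕ Fin K) 𝔽,
      Fits (Matrix.fromBlocks FX B B FX) M' ∧ M'.rank = n} := by
    exact ⟨M, hfitM, le_antisymm hrankM (hlow M.rank ⟨M, hfitM, rfl⟩)⟩
  exact le_antisymm (Nat.sInf_le hmem) (le_csInf ⟨r, hmem⟩ hlow)
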